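/- Let Γ be a group acting by homeomorphisms on a Hausdorff topological space Ω. Assume that the action of Γ on Ω is strongly hyperbolic and that the action of Γ on L_Γ is strongly faithful. Then every nonempty Γ-invariant closed subset of Ω contains the closure of L_Γ. -/
import Mathlib


open Filter Set

section PowersDefs

def IsPowersGroup (Γ : Type*) [Group Γ] : Prop :=
  Nontrivial Γ ∧
    ∀ F : Finset Γ, (1 : Γ) ∉ F → ∀ N : ℕ, 1 ≤ N →
      ∃ (C : Set Γ) (g : Fin N → Γ),
        (∀ f ∈ F, (fun x => f * x) '' C ∩ C = ∅) ∧
        ∀ j k : Fin N, j ≠ k →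
          (fun x => g j * x) '' Cᶜ ∩ (fun x => g k * x) '' Cᶜ = ∅

def IsSubnormalIn {Γ : Type*} [Group Γ] (N : Subgroup Γ) : Prop :=
  ∃ (k : ℕ) (c : ℕ → Subgroup Γ), c 0 = N ∧ c k = ⊤ ∧
    ∀ i < k, c i ≤ c (i + 1) ∧ ∀ x ∈ c (i + 1), ∀ y ∈ c i, x * y * x⁻¹ ∈ c i

def IsStronglyPowersGroup (Γ : Type*) [Group Γ] : Prop :=
  ∀ N : Subgroup Γ, IsSubnormalIn N → N ≠ ⊥ → IsPowersGroup N

end PowersDefs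

section HomeoDefs

variable {Γ : Type*} [Group Γ]

/-- Each group element acts continuously (hence, the group acting, by homeomorphisms). -/
def ActsByHomeos (Γ : Type*) [Group Γ] (Ω : Type*) [TopologicalSpace Ω] [MulAction Γ Ω] :
    Prop :=
  ∀ γ : Γ, Continuous fun x : Ω => γ • x

/-- `ω` is a sink of the hyperbolic homeomorphism `γ`: there is a source `α` fixed by `γ`
such that `γ` is hyperbolic with attracting point `ω` and repelling point `α`. -/
def IsSinkOf {Ω : Type*} [TopologicalSpace Ω] [MulAction Γ Ω] (γ : Γ) (ω : Ω) : Prop :=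
  ∃ α : Ω, γ • α = α ∧ γ • ω = ω ∧
    ∀ U ∈ nhds α, ∀ W ∈ nhds ω, ∀ᶠ n : ℕ in Filter.atTop,
      (∀ x : Ω, x ∉ U → γ ^ n • x ∈ W) ∧ (∀ x : Ω, x ∉ W → γ⁻¹ ^ n • x ∈ U)

/-- A hyperbolic homeomorphism. -/
def IsHypHomeo (Ω : Type*) [TopologicalSpace Ω] [MulAction Γ Ω] (γ : Γ) : Prop :=
  ∃ ω : Ω, IsSinkOf γ ω

/-- Two homeomorphisms are transverse if they have no common fixed point. -/
def TransverseOn (Ω : Type*) [MulAction Γ Ω] (γ δ : Γ) : Prop :=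
  ¬ ∃ x : Ω, γ • x = x ∧ δ • x = x

/-- A strongly hyperbolic action by homeomorphisms: there is a pair of transverse hyperbolic
homeomorphisms in the group. -/
def StronglyHypHomeoAction (Γ : Type*) [Group Γ] (Ω : Type*) [TopologicalSpace Ω]
    [MulAction Γ Ω] : Prop :=
  ∃ γ δ : Γ, IsHypHomeo Ω γ ∧ IsHypHomeo Ω δ ∧ TransverseOn Ω γ δ

/-- The set `L_N` of sinks of hyperbolic elements of a subgroup `N`. -/
def sinkSet (Ω : Type*) [TopologicalSpace Ω] [MulAction Γ Ω] (N : Subgroup Γ) : Set Ω :=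
  {ω : Ω | ∃ γ ∈ N, IsSinkOf γ ω}

/-- A strongly faithful action on the subset `S`. -/
def StronglyFaithfulOn (Γ : Type*) [Group Γ] {Ω : Type*} [MulAction Γ Ω] (S : Set Ω) :
    Prop :=
  ∀ F : Finset Γ, (1 : Γ) ∉ F → ∃ ω ∈ S, ∀ γ ∈ F, γ • ω ≠ ω

/-- A minimal action by homeomorphisms: the only invariant closed subsets are trivial. -/
def MinimalHomeoAction (Γ : Type*) [Group Γ] (Ω : Type*) [TopologicalSpace Ω]
    [MulAction Γ Ω] : Prop :=
  ∀ C : Set Ω, IsClosed C → (∀ γ : Γ, ∀ x ∈ C, γ • x ∈ C) → C = ∅ ∨ C = Set.univ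

end HomeoDefs

theorem statement17 {Γ : Type*} [Group Γ] {Ω : Type*} [TopologicalSpace Ω] [T2Space Ω]
    [MulAction Γ Ω] (hcont : ActsByHomeos Γ Ω)
    (hsh : StronglyHypHomeoAction Γ Ω)
    (hfaith : StronglyFaithfulOn Γ (sinkSet Ω (⊤ : Subgroup Γ))) :
    ∀ C : Set Ω, C.Nonempty → IsClosed C → (∀ γ : Γ, ∀ x ∈ C, γ • x ∈ C) →
      closure (sinkSet Ω (⊤ : Subgroup Γ)) ⊆ C := by
  intro C hCne hCcl hCinv
  have hL : sinkSet Ω (⊤ : Subgroup Γ) ⊆ C := by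
    rintro ω ⟨γ, -, α, hα, hω, hdyn⟩
    obtain ⟨x, hxC, hxα⟩ : ∃ x ∈ C, x ≠ α := by
      by_contra h
      push_neg at h
      obtain ⟨x0, hx0⟩ := hCne
      have hαC : α ∈ C := h x0 hx0 ▸ hx0
      obtain ⟨g, d, -, -, htr⟩ := hsh
      exact htr ⟨α, h _ (hCinv g α hαC), h _ (hCinv d α hαC)⟩
    by_contra hωC
    obtain ⟨U, V, hU, hV, hαU, hxV, hUV⟩ := t2_separation (Ne.symm hxα)
    have hUn : U ∈ nhds α := hU.mem_nhds hαU
    have hWn : Cᶜ ∈ nhds ω := hCcl.isOpen_compl.mem_nhds hωC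
    obtain ⟨n, hn⟩ := (hdyn U hUn Cᶜ hWn).exists
    have hxU : x ∉ U := fun hxU => hUV.ne_of_mem hxU hxV rfl
    exact hn.1 x hxU (hCinv (γ ^ n) x hxC)
  exact closure_minimal hL hCcl
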